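/- Let A be a maximal monotone operator on a Hilbert space H and let Y: [0,∞) → H be the unique solution of dY/dt ∈ −A(Y(t)), Y(0) = Y₀ ∈ D(A). Then for a.e. t > 0, the right derivative d⁺Y/dt(t) equals −A°(Y(t)), where A°(Y) is the element of minimal norm in A(Y); i.e., ‖dY/dt(t)‖ = min{‖Z‖ : Z ∈ A(Y(t))}. -/

import Mathlib

open scoped RealInnerProductSpace

/-- Let `A` be a maximal monotone operator on a real Hilbert space `H`
(monotone with `I + λA` surjective for `λ > 0`, by Minty's theorem) and let `Y` be the
solution of the differential inclusion `dY/dt ∈ -A(Y(t))` with `Y(0) = Y₀ ∈ D(A)`.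
Then for a.e. `t > 0` the derivative has minimal norm: `‖dY/dt(t)‖ = min {‖Z‖ : Z ∈ A(Y(t))}`,
i.e. `dY/dt(t) = -A°(Y(t))` where `A°(Y)` is the minimal section of `A(Y)` (slow solutions). -/
theorem slow_solution_property
    {H : Type*} [NormedAddCommGroup H] [InnerProductSpace ℝ H] [CompleteSpace H]
    (A : H → Set H)
    (hmono : ∀ Y₁ Y₂ Z₁ Z₂ : H, Z₁ ∈ A Y₁ → Z₂ ∈ A Y₂ → 0 ≤ ⟪Z₁ - Z₂, Y₁ - Y₂⟫)
    (hmax : ∀ lam : ℝ, 0 < lam → ∀ W : H, ∃ Y Z : H, Z ∈ A Y ∧ Y + lam • Z = W)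
    (Y₀ : H) (hY₀ : (A Y₀).Nonempty)
    (Y Y' : ℝ → H) (hY0 : Y 0 = Y₀)
    (hcont : Continuous Y)
    (hderiv : ∀ᵐ t ∂(MeasureTheory.volume.restrict (Set.Ioi (0 : ℝ))),
      HasDerivAt Y (Y' t) t ∧ -Y' t ∈ A (Y t)) :
    ∀ᵐ t ∂(MeasureTheory.volume.restrict (Set.Ioi (0 : ℝ))),
      IsLeast {r : ℝ | ∃ Z ∈ A (Y t), r = ‖Z‖} ‖Y' t‖ := by
  classical
  borelize H
  set μ := MeasureTheory.volume.restrict (Set.Ioi (0 : ℝ)) with hμ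
  set g : ℝ → H := deriv Y with hgdef
  have hgmeas : Measurable g := measurable_deriv Y
  obtain ⟨D, hDc, hDd⟩ :
      ∃ D : Set H, D.Countable ∧ Set.range g ⊆ closure D :=
    (stronglyMeasurable_deriv Y).isSeparable_range
  -- the good measurable set G
  set N : Set ℝ := {t | ¬ (HasDerivAt Y (Y' t) t ∧ -Y' t ∈ A (Y t))} with hNdef
  have hNnull : MeasureTheory.volume (N ∩ Set.Ioi (0:ℝ)) = 0 := by
    have : μ N = 0 := hderiv
    rwa [hμ, MeasureTheory.Measure.restrict_apply' measurableSet_Ioi] at this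
  set M : Set ℝ := MeasureTheory.toMeasurable MeasureTheory.volume (N ∩ Set.Ioi (0:ℝ)) with hMdef
  have hMmeas : MeasurableSet M := MeasureTheory.measurableSet_toMeasurable _ _
  have hMnull : MeasureTheory.volume M = 0 := by
    rw [hMdef, MeasureTheory.measure_toMeasurable]; exact hNnull
  set G : Set ℝ := Set.Ioi (0:ℝ) \ M with hGdef
  have hGmeas : MeasurableSet G := measurableSet_Ioi.diff hMmeas
  have hGP : ∀ t ∈ G, HasDerivAt Y (Y' t) t ∧ -Y' t ∈ A (Y t) := by
    intro t ht
    by_contra hP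
    exact ht.2 (MeasureTheory.subset_toMeasurable _ _ ⟨hP, ht.1⟩)
  have hGg : ∀ t ∈ G, g t = Y' t := fun t ht => (hGP t ht).1.deriv
  have hGae : ∀ᵐ t ∂μ, t ∈ G := by
    rw [hμ, MeasureTheory.ae_iff, MeasureTheory.Measure.restrict_apply' measurableSet_Ioi]
    refine MeasureTheory.measure_mono_null (fun x hx => ?_) hMnull
    simp only [Set.mem_inter_iff, Set.mem_setOf_eq, hGdef, Set.mem_diff, not_and, not_not] at hx
    exact hx.1 hx.2
  -- density sets
  set S : H → ℕ → Set ℝ := fun c k =>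
    G ∩ g ⁻¹' (Metric.closedBall c (1 / (k + 1))) with hSdef
  have hSmeas : ∀ c k, MeasurableSet (S c k) := fun c k =>
    hGmeas.inter (hgmeas measurableSet_closedBall)
  have hdens : ∀ᵐ t ∂MeasureTheory.volume, ∀ c ∈ D, ∀ k : ℕ, t ∈ S c k →
      Filter.Tendsto
        (fun r => MeasureTheory.volume (S c k ∩ Metric.closedBall t r) /
          MeasureTheory.volume (Metric.closedBall t r)) (nhdsWithin 0 (Set.Ioi 0)) (nhds 1) := by
    rw [MeasureTheory.ae_ball_iff hDc]
    intro c hc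
    rw [MeasureTheory.ae_all_iff]
    intro k
    filter_upwards [Besicovitch.ae_tendsto_measure_inter_div_of_measurableSet
      MeasureTheory.volume (hSmeas c k)] with x hx hxS
    simpa [Set.indicator_of_mem hxS] using hx
  have hdensμ : ∀ᵐ t ∂μ, ∀ c ∈ D, ∀ k : ℕ, t ∈ S c k →
      Filter.Tendsto
        (fun r => MeasureTheory.volume (S c k ∩ Metric.closedBall t r) /
          MeasureTheory.volume (Metric.closedBall t r)) (nhdsWithin 0 (Set.Ioi 0)) (nhds 1) :=
    MeasureTheory.ae_restrict_of_ae hdens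
  filter_upwards [hGae, hdensμ] with t htG htd
  obtain ⟨hder, hmem⟩ := hGP t htG
  constructor
  · exact ⟨-Y' t, hmem, (norm_neg _).symm⟩
  rintro r ⟨Z, hZ, rfl⟩
  set u : H := Y' t with hudef
  -- main claim
  have claim : ∀ ε : ℝ, 0 < ε → ε ≤ 1 →
      ‖u‖ ^ 2 ≤ ‖Z‖ * ‖u‖ + ε * (2 * ‖u‖ + ‖Z‖ + 1) := by
    intro ε hε hε1
    -- little-o bound from differentiability
    have hlo := (hasDerivAt_iff_isLittleO.mp hder)
    have hev : ∀ᶠ s in nhds t, ‖Y s - Y t - (s - t) • u‖ ≤ ε * ‖s - t‖ :=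
      Asymptotics.isLittleO_iff.mp hlo hε
    obtain ⟨δ, hδpos, hδ⟩ := Metric.eventually_nhds_iff.mp hev
    -- choose k and c
    obtain ⟨k, hk⟩ := exists_nat_one_div_lt (half_pos hε)
    have hk1 : (0:ℝ) < 1 / (k + 1) := by positivity
    have hgt : g t ∈ closure D := hDd ⟨t, rfl⟩
    obtain ⟨c, hcD, hcd⟩ := Metric.mem_closure_iff.mp hgt _ hk1
    have htS : t ∈ S c k := ⟨htG, by
      simp only [Set.mem_preimage, Metric.mem_closedBall]
      exact hcd.le⟩
    -- density at t
    have htend := htd c hcD k htS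
    have hhalf : ∀ᶠ r in nhdsWithin (0:ℝ) (Set.Ioi 0),
        (1/2 : ENNReal) < MeasureTheory.volume (S c k ∩ Metric.closedBall t r) /
          MeasureTheory.volume (Metric.closedBall t r) :=
      htend.eventually_const_lt (by norm_num)
    have hIoo : ∀ᶠ r in nhdsWithin (0:ℝ) (Set.Ioi 0), r ∈ Set.Ioo (0:ℝ) δ :=
      Ioo_mem_nhdsGT_of_mem ⟨le_refl 0, hδpos⟩
    obtain ⟨ρ, hρhalf, hρ0, hρδ⟩ := (hhalf.and hIoo).exists
    -- find s in S c k to the right of t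
    have hne : (S c k ∩ Set.Ioc t (t + ρ)).Nonempty := by
      by_contra hempty
      rw [Set.not_nonempty_iff_eq_empty] at hempty
      have hsub : S c k ∩ Metric.closedBall t ρ ⊆ Set.Icc (t - ρ) t := by
        rintro x ⟨hxS, hxB⟩
        rw [Real.closedBall_eq_Icc] at hxB
        refine ⟨hxB.1, ?_⟩
        by_contra hxgt
        push_neg at hxgt
        have hxmem : x ∈ S c k ∩ Set.Ioc t (t + ρ) := ⟨hxS, hxgt, hxB.2⟩
        rw [hempty] at hxmem
        exact Set.notMem_empty x hxmem
      have hle : MeasureTheory.volume (S c k ∩ Metric.closedBall t ρ) ≤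
          ENNReal.ofReal ρ := by
        refine le_trans (MeasureTheory.measure_mono hsub) ?_
        rw [Real.volume_Icc]
        apply le_of_eq
        congr 1
        ring
      have hlt : ENNReal.ofReal ρ <
          MeasureTheory.volume (S c k ∩ Metric.closedBall t ρ) := by
        have hb0 : MeasureTheory.volume (Metric.closedBall t ρ) ≠ 0 := by
          rw [Real.volume_closedBall]
          simp only [ne_eq, ENNReal.ofReal_eq_zero, not_le]
          linarith
        have hbt : MeasureTheory.volume (Metric.closedBall t ρ) ≠ ⊤ := by
          rw [Real.volume_closedBall]; exact ENNReal.ofReal_ne_top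
        have := (ENNReal.lt_div_iff_mul_lt (Or.inl hb0) (Or.inl hbt)).mp hρhalf
        calc ENNReal.ofReal ρ
            = (1/2 : ENNReal) * MeasureTheory.volume (Metric.closedBall t ρ) := by
              rw [Real.volume_closedBall]
              rw [ENNReal.ofReal_mul (by norm_num : (0:ℝ) ≤ 2), ENNReal.ofReal_ofNat,
                one_div, ← mul_assoc,
                ENNReal.inv_mul_cancel (by norm_num) ENNReal.ofNat_ne_top, one_mul]
          _ < _ := this
      exact absurd hle (not_le.mpr hlt)
    obtain ⟨s, hsS, hsIoc⟩ := hne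
    -- properties of s
    have hsG : s ∈ G := hsS.1
    obtain ⟨hders, hmems⟩ := hGP s hsG
    have hst : 0 < s - t := sub_pos.mpr hsIoc.1
    have hsball : dist s t < δ := by
      rw [Real.dist_eq, abs_of_pos hst]
      linarith [hsIoc.2, hρδ]
    -- error terms
    set e : H := Y s - Y t - (s - t) • u with hedef
    have he : ‖e‖ ≤ ε * (s - t) := by
      have := hδ hsball
      rwa [Real.norm_eq_abs, abs_of_pos hst] at this
    set w : H := Y' s - u with hwdef
    have hw : ‖w‖ ≤ ε := by
      have h1 : dist (g s) c ≤ 1 / (k + 1) := hsS.2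
      have h2 : dist (g t) c < 1 / (k + 1) := hcd
      have h3 : dist (g s) (g t) < 2 / (k + 1) := by
        calc dist (g s) (g t) ≤ dist (g s) c + dist c (g t) := dist_triangle _ _ _
          _ < 1 / (k + 1) + 1 / (k + 1) := by
              rw [dist_comm c (g t)]; linarith
          _ = 2 / (k + 1) := by ring
      have h4 : (2:ℝ) / (k + 1) < ε := by
        have : (2:ℝ) / (k+1) = 2 * (1 / (k+1)) := by ring
        rw [this]; linarith
      have h5 : ‖w‖ = dist (g s) (g t) := by
        rw [hwdef, hudef, dist_eq_norm, hGg s hsG, hGg t htG]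
      linarith [h5 ▸ h3]
    -- monotonicity
    have hmon : 0 ≤ ⟪-Y' s - Z, Y s - Y t⟫ := hmono (Y s) (Y t) (-Y' s) Z hmems hZ
    -- expand
    have hYs : Y s - Y t = (s - t) • u + e := by rw [hedef]; abel
    have hYs' : Y' s = u + w := by rw [hwdef]; abel
    have hexp : ⟪-Y' s - Z, Y s - Y t⟫
        = (s - t) * (-⟪u, u⟫ - ⟪w, u⟫ - ⟪Z, u⟫) + ⟪-(u + w) - Z, e⟫ := by
      rw [hYs, hYs']
      simp only [inner_add_right, inner_sub_left, inner_neg_left, inner_add_left,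
        real_inner_smul_right]
      ring
    have b1 : ⟪-(u + w) - Z, e⟫ ≤ ‖-(u + w) - Z‖ * ‖e‖ := real_inner_le_norm _ _
    have b2 : ‖-(u + w) - Z‖ ≤ ‖u‖ + ‖w‖ + ‖Z‖ := by
      calc ‖-(u + w) - Z‖ ≤ ‖-(u+w)‖ + ‖Z‖ := norm_sub_le _ _
        _ = ‖u + w‖ + ‖Z‖ := by rw [norm_neg]
        _ ≤ ‖u‖ + ‖w‖ + ‖Z‖ := by linarith [norm_add_le u w]
    have b6 : ‖-(u + w) - Z‖ * ‖e‖ ≤ (‖u‖ + ‖w‖ + ‖Z‖) * (ε * (s - t)) :=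
      mul_le_mul b2 he (norm_nonneg _) (by positivity)
    have b5 : ⟪u, u⟫ = ‖u‖ ^ 2 := real_inner_self_eq_norm_sq u
    have b3 : -(‖w‖ * ‖u‖) ≤ ⟪w, u⟫ :=
      neg_le_of_abs_le (abs_real_inner_le_norm _ _)
    have b4 : -(‖Z‖ * ‖u‖) ≤ ⟪Z, u⟫ :=
      neg_le_of_abs_le (abs_real_inner_le_norm _ _)
    have step : 0 ≤ (s - t) * (-‖u‖ ^ 2 - ⟪w, u⟫ - ⟪Z, u⟫ + ε * (‖u‖ + ‖w‖ + ‖Z‖)) := by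
      have h0 : 0 ≤ (s - t) * (-⟪u, u⟫ - ⟪w, u⟫ - ⟪Z, u⟫) +
          (‖u‖ + ‖w‖ + ‖Z‖) * (ε * (s - t)) := by
        have := hmon
        rw [hexp] at this
        linarith
      rw [b5] at h0
      have hring : (s - t) * (-‖u‖ ^ 2 - ⟪w, u⟫ - ⟪Z, u⟫ + ε * (‖u‖ + ‖w‖ + ‖Z‖))
          = (s - t) * (-‖u‖ ^ 2 - ⟪w, u⟫ - ⟪Z, u⟫) + (‖u‖ + ‖w‖ + ‖Z‖) * (ε * (s - t)) := by
        ring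
      rw [hring]
      linarith
    have step2 : 0 ≤ -‖u‖ ^ 2 - ⟪w, u⟫ - ⟪Z, u⟫ + ε * (‖u‖ + ‖w‖ + ‖Z‖) :=
      nonneg_of_mul_nonneg_right step hst
    have hwu : ‖w‖ * ‖u‖ ≤ ε * ‖u‖ := mul_le_mul_of_nonneg_right hw (norm_nonneg _)
    have hεw : ε * ‖w‖ ≤ ε * 1 := mul_le_mul_of_nonneg_left (hw.trans hε1) hε.le
    linarith [step2, b3, b4, hwu, hεw]
  -- conclude ‖u‖^2 ≤ ‖Z‖ * ‖u‖
  have hsq : ‖u‖ ^ 2 ≤ ‖Z‖ * ‖u‖ := by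
    by_contra hlt
    push_neg at hlt
    set C : ℝ := 2 * ‖u‖ + ‖Z‖ + 1 with hCdef
    have hC : 0 < C := by positivity
    set d : ℝ := ‖u‖ ^ 2 - ‖Z‖ * ‖u‖ with hddef
    have hd : 0 < d := by simp only [hddef]; linarith
    set ε : ℝ := min 1 (d / (2 * C)) with hεdef
    have hεpos : 0 < ε := lt_min one_pos (by positivity)
    have hε1 : ε ≤ 1 := min_le_left _ _
    have h1 := claim ε hεpos hε1
    have h2 : ε ≤ d / (2 * C) := min_le_right _ _
    have h3 : ε * C ≤ d / 2 := by
      calc ε * C ≤ (d / (2 * C)) * C := mul_le_mul_of_nonneg_right h2 hC.le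
        _ = d / 2 := by field_simp
    have h1' : ‖u‖ ^ 2 ≤ ‖Z‖ * ‖u‖ + ε * C := h1
    have h4 : (0:ℝ) < ‖u‖ ^ 2 - ‖Z‖ * ‖u‖ := by linarith
    have h5 : ε * C ≤ (‖u‖ ^ 2 - ‖Z‖ * ‖u‖) / 2 := by
      refine h3.trans (le_of_eq ?_)
      rw [hddef]
    nlinarith [h1', h5, h4]
  have hupos : 0 ≤ ‖u‖ := norm_nonneg u
  rcases eq_or_lt_of_le hupos with h0 | h0
  · rw [← h0]; exact norm_nonneg Z
  · have : ‖u‖ * ‖u‖ ≤ ‖Z‖ * ‖u‖ := by nlinarith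
    exact le_of_mul_le_mul_right this h0
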